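/- For every k ≥ 1 one has the identity of linear maps B̄ → B̄: Σ_{i=1}^{k} S̄_i∘e_{i,k+1} = −(𝒫_1 + ⋯ + 𝒫_k). -/
import Mathlib


theorem stmt_2
    {𝕂 : Type*} [RCLike 𝕂]
    {B B' : Type*} [AddCommGroup B] [Module 𝕂 B]
    [AddCommGroup B'] [Module 𝕂 B']
    (L : ℕ → B →ₗ[𝕂] B')
    (Sb S : ℕ → B →ₗ[𝕂] B')
    (N Nc : ℕ → Submodule 𝕂 B)
    (R Rc : ℕ → Submodule 𝕂 B')
    (P : ℕ → B' →ₗ[𝕂] B')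
    (T : ℕ → B' →ₗ[𝕂] B)
    (E M : ℕ → ℕ → B →ₗ[𝕂] B)
    (hL : ∃ i, L i ≠ 0)
    (hN0 : N 0 = ⊤) (hRc0 : Rc 0 = ⊤)
    (hSb1 : Sb 1 = L 0)
    (hSbrec : ∀ k, 1 ≤ k → Sb (k + 1) = ∑ i ∈ Finset.Icc 1 k, (L i).comp (M i k))
    (hSdef : ∀ k, S (k + 1) = Sb (k + 1) - ∑ i ∈ Finset.Icc 1 k, (P i).comp (Sb (k + 1)))
    (hNdef : ∀ k, N (k + 1) = LinearMap.ker (S (k + 1)) ⊓ N k)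
    (hRdef : ∀ k, R (k + 1) = Submodule.map (S (k + 1)) (N k))
    (hNcompl : ∀ k, Disjoint (Nc (k + 1)) (N (k + 1)) ∧ Nc (k + 1) ⊔ N (k + 1) = N k)
    (hRcompl : ∀ k, Disjoint (R (k + 1)) (Rc (k + 1)) ∧ R (k + 1) ⊔ Rc (k + 1) = Rc k)
    (hPrange : ∀ i, 1 ≤ i → LinearMap.range (P i) ≤ R i)
    (hPid : ∀ i, 1 ≤ i → ∀ y ∈ R i, P i y = y)
    (hPzeroRc : ∀ i, 1 ≤ i → ∀ y ∈ Rc i, P i y = 0)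
    (hPzeroR : ∀ i j, 1 ≤ j → j < i → ∀ y ∈ R j, P i y = 0)
    (hTrange : ∀ i, 1 ≤ i → ∀ y, T i y ∈ Nc i)
    (hTS : ∀ i, 1 ≤ i → ∀ x ∈ Nc i, T i (S i x) = x)
    (hST : ∀ i, 1 ≤ i → ∀ y, S i (T i y) = P i y)
    (hE11 : E 1 1 = LinearMap.id)
    (hEdiag : ∀ k, E (k + 1) (k + 1) = LinearMap.id)
    (hErec : ∀ k i, 1 ≤ i → i ≤ k →
      E i (k + 1) = -((T i).comp (∑ v ∈ Finset.Icc (i + 1) (k + 1), (Sb v).comp (E v (k + 1)))))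
    (hM11 : M 1 1 = LinearMap.id)
    (hM1 : ∀ k, 1 ≤ k → M 1 (k + 1) = E 1 (k + 1))
    (hMrec : ∀ k a, 2 ≤ a → a ≤ k + 1 →
      M a (k + 1) = ∑ b ∈ Finset.Icc (a - 1) k, (M (a - 1) b).comp (E (b + 1) (k + 1)))
    (e : ℕ → ℕ → B' →ₗ[𝕂] B)
    (heBase : ∀ m, 2 ≤ m → e (m - 1) m = -(T (m - 1)))
    (heStep : ∀ m i, 1 ≤ i → i + 2 ≤ m →
      e i m = (e i (m - 1)).comp ((LinearMap.id : B' →ₗ[𝕂] B') - (Sb (m - 1)).comp (T (m - 1))))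
    :
    ∀ k, 1 ≤ k →
      ∑ i ∈ Finset.Icc 1 k, (Sb i).comp (e i (k + 1)) = -(∑ i ∈ Finset.Icc 1 k, P i) := by
  intro k hk
  induction k with
  | zero => omega
  | succ n ih =>
    rcases Nat.eq_zero_or_pos n with hn | hn
    · subst hn
      have hS1 : S 1 = Sb 1 := by simpa using hSdef 0
      have he12 : e 1 2 = -(T 1) := by simpa using heBase 2 (by norm_num)
      ext y
      simp [he12, ← hS1, hST 1 le_rfl y]
    · have ihn := ih hn
      have hbase : e (n + 1) (n + 2) = -(T (n + 1)) := by
        simpa using heBase (n + 2) (by omega)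
      have hstep : ∀ i ∈ Finset.Icc 1 n,
          e i (n + 2) = (e i (n + 1)).comp
            ((LinearMap.id : B' →ₗ[𝕂] B') - (Sb (n + 1)).comp (T (n + 1))) := by
        intro i hi
        simp only [Finset.mem_Icc] at hi
        simpa using heStep (n + 2) i hi.1 (by omega)
      have hsplit : ∑ i ∈ Finset.Icc 1 (n + 1), (Sb i).comp (e i (n + 1 + 1)) =
          (∑ i ∈ Finset.Icc 1 n, (Sb i).comp (e i (n + 2)))
            + (Sb (n + 1)).comp (e (n + 1) (n + 2)) :=
        Finset.sum_Icc_succ_top (by omega) _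
      have hPsplit : ∑ i ∈ Finset.Icc 1 (n + 1), P i =
          (∑ i ∈ Finset.Icc 1 n, P i) + P (n + 1) :=
        Finset.sum_Icc_succ_top (by omega) _
      have hmid : ∑ i ∈ Finset.Icc 1 n, (Sb i).comp (e i (n + 2)) =
          (∑ i ∈ Finset.Icc 1 n, (Sb i).comp (e i (n + 1))).comp
            ((LinearMap.id : B' →ₗ[𝕂] B') - (Sb (n + 1)).comp (T (n + 1))) := by
        ext x
        simp only [LinearMap.sum_apply, LinearMap.comp_apply]
        refine Finset.sum_congr rfl fun i hi => ?_
        rw [hstep i hi]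
        rfl
      have hSn : ∀ y, S (n + 1) y = Sb (n + 1) y -
          ∑ i ∈ Finset.Icc 1 n, P i (Sb (n + 1) y) := by
        intro y
        rw [hSdef n]
        simp [LinearMap.sum_apply]
      ext y
      rw [hsplit, hmid, ihn, hbase, hPsplit]
      have hsn := hSn (T (n + 1) y)
      rw [hST (n + 1) (by omega) y] at hsn
      simp only [LinearMap.add_apply, LinearMap.comp_apply, LinearMap.sub_apply,
        LinearMap.neg_apply, LinearMap.id_apply, LinearMap.sum_apply, map_sub, map_neg]
      rw [hsn]
      abel
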